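/- For any coprime integers a and b with b ≥ 1, the average (1/b) ∑_{N=0}^{b-1} log P_N(a/b) equals (log b)/2. -/

import Mathlib

open Finset

/-- The Sudler product `P_N(α) = ∏_{n=1}^N |2 sin(π n α)|`. -/
noncomputable def sudler (N : ℕ) (α : ℝ) : ℝ :=
  ∏ n ∈ Finset.Icc 1 N, |2 * Real.sin (Real.pi * n * α)|

lemma abs_one_sub_exp (θ : ℝ) :
    ‖1 - Complex.exp (θ * Complex.I)‖ = 2 * |Real.sin (θ / 2)| := by
  have h : Complex.normSq (1 - Complex.exp (θ * Complex.I)) = 2 * (1 - Real.cos θ) := by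
    rw [Complex.exp_mul_I]
    simp [Complex.normSq_apply, Complex.cos_ofReal_re, Complex.sin_ofReal_re]
    nlinarith [Real.sin_sq_add_cos_sq θ]
  rw [Complex.norm_def, h, Real.abs_sin_half]
  rw [show 2 * (1 - Real.cos θ) = 2^2 * ((1 - Real.cos θ)/2) by ring,
    Real.sqrt_mul (by positivity), Real.sqrt_sq (by norm_num)]

lemma key_prod (m : ℕ) (r : ℕ) (hr : r.Coprime (m + 1)) :
    ∏ n ∈ Finset.Icc 1 m, |2 * Real.sin (Real.pi * n * r / (m + 1))| = m + 1 := by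
  set b : ℕ := m + 1 with hb
  have hζ := Complex.isPrimitiveRoot_exp b (Nat.succ_ne_zero m)
  have hμ : IsPrimitiveRoot (Complex.exp (2 * Real.pi * Complex.I / b) ^ r) b :=
    hζ.pow_of_coprime r hr
  have hp := hμ.prod_one_sub_pow_eq_order
  have habs := congrArg (‖·‖) hp
  rw [norm_prod] at habs
  have hterm : ∀ k ∈ range m,
      ‖1 - (Complex.exp (2 * Real.pi * Complex.I / b) ^ r) ^ (k + 1)‖ =
        |2 * Real.sin (Real.pi * (k + 1) * r / b)| := by
    intro k _
    rw [← Complex.exp_nat_mul, ← Complex.exp_nat_mul]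
    have : (((k + 1 : ℕ) : ℂ)) * ((r : ℂ) * (2 * Real.pi * Complex.I / b)) =
        (((2 * Real.pi * (k+1) * r / b) : ℝ) : ℂ) * Complex.I := by
      push_cast
      have : (b : ℂ) ≠ 0 := Nat.cast_ne_zero.mpr (Nat.succ_ne_zero m)
      field_simp
    rw [this, abs_one_sub_exp, abs_mul, abs_two,
      show 2 * Real.pi * ((k:ℝ) + 1) * r / b / 2 = Real.pi * ((k:ℝ)+1) * r / b by ring]
  rw [Finset.prod_congr rfl hterm] at habs
  rw [show ‖(m : ℂ) + 1‖ = (m : ℝ) + 1 by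
    rw [show ((m : ℂ) + 1) = ((((m : ℝ) + 1) : ℝ) : ℂ) by push_cast; ring,
      Complex.norm_of_nonneg (by positivity)]] at habs
  have hre : ∏ n ∈ Icc 1 m, |2 * Real.sin (Real.pi * n * r / (b:ℝ))|
      = ∏ k ∈ range m, |2 * Real.sin (Real.pi * ((k:ℝ)+1) * r / (b:ℝ))| := by
    rw [← Finset.Ico_add_one_right_eq_Icc, Finset.prod_Ico_eq_prod_range]
    apply Finset.prod_congr (by simp)
    intro k _
    push_cast
    ring_nf
  rw [show ((m:ℝ) + 1) = ((b:ℕ) : ℝ) by rw [hb]; push_cast; ring] at habs ⊢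
  rw [hre]; exact habs

lemma term_eq (a b : ℤ) (hb : 1 ≤ b) (n : ℕ) :
    |2 * Real.sin (Real.pi * n * ((a:ℝ)/b))| =
      |2 * Real.sin (Real.pi * n * ((a % b).toNat : ℝ) / b)| := by
  have hbne : (b:ℝ) ≠ 0 := by
    exact_mod_cast (by omega : b ≠ 0)
  have h0 : 0 ≤ a % b := Int.emod_nonneg a (by omega)
  have hcast : ((a % b).toNat : ℝ) = ((a % b : ℤ) : ℝ) := by
    exact_mod_cast congrArg (fun z : ℤ => (z : ℝ)) (Int.toNat_of_nonneg h0)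
  have key : Real.pi * n * ((a:ℝ)/b) =
      Real.pi * n * ((a % b).toNat : ℝ) / b + (((n : ℤ) * (a / b) : ℤ) : ℝ) * Real.pi := by
    rw [hcast, Int.emod_def]
    push_cast
    field_simp
    ring
  rw [key, Real.sin_add_int_mul_pi]
  simp [abs_mul, abs_neg_one_zpow]

lemma sin_ne_zero_aux (a b : ℤ) (hb : 1 ≤ b) (hab : IsCoprime a b) {n : ℕ}
    (h1 : 1 ≤ n) (h2 : (n:ℤ) < b) : Real.sin (Real.pi * n * ((a:ℝ)/b)) ≠ 0 := by
  intro h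
  rw [Real.sin_eq_zero_iff] at h
  obtain ⟨k, hk⟩ := h
  have hbne : (b:ℝ) ≠ 0 := by exact_mod_cast (by omega : b ≠ 0)
  have hpi : Real.pi ≠ 0 := Real.pi_ne_zero
  have hk' : ((k:ℝ) * b) * Real.pi = ((n:ℝ) * a) * Real.pi := by
    field_simp at hk
    linear_combination Real.pi * hk
  have hR : ((k:ℝ) * b) = ((n:ℝ) * a) := mul_right_cancel₀ hpi hk'
  have hZ : k * b = (n : ℤ) * a := by exact_mod_cast hR
  have hdvd : b ∣ (n : ℤ) * a := ⟨k, by linarith [hZ]⟩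
  have hdn : b ∣ (n : ℤ) := hab.symm.dvd_of_dvd_mul_right hdvd
  have := Int.le_of_dvd (by exact_mod_cast h1) hdn
  omega

/-- The average of `log P_N(a/b)` over `0 ≤ N < b` equals `(log b)/2`. -/
theorem sudler_log_average (a b : ℤ) (hb : 1 ≤ b) (hab : IsCoprime a b) :
    (1 / (b : ℝ)) * ∑ N ∈ Finset.range b.toNat, Real.log (sudler N ((a : ℝ) / b)) =
      Real.log b / 2 := by
  obtain ⟨m, hm⟩ : ∃ m : ℕ, b.toNat = m + 1 := ⟨b.toNat - 1, by omega⟩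
  have hbm : (b : ℝ) = (m : ℝ) + 1 := by
    have h : ((b.toNat : ℤ) : ℝ) = (b : ℝ) := by
      rw [Int.toNat_of_nonneg (by omega)]
    rw [← h, hm]; push_cast; ring
  have h0 : 0 ≤ a % b := Int.emod_nonneg a (by omega)
  set r : ℕ := (a % b).toNat with hrdef
  -- coprimality of r and m+1
  have hcop : r.Coprime (m + 1) := by
    have h1 : IsCoprime (a % b) b := by
      have := hab.add_mul_left_left (-(a / b))
      rwa [show a + b * -(a / b) = a % b by rw [Int.emod_def]; ring] at this
    have h2 : Int.gcd (a % b) b = 1 := Int.isCoprime_iff_gcd_eq_one.mp h1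
    have h3 : (a % b).natAbs = r := by rw [hrdef]; omega
    have h4 : b.natAbs = m + 1 := by omega
    have h5 : Int.gcd (a % b) b = Nat.gcd (a % b).natAbs b.natAbs := rfl
    rw [h5, h3, h4] at h2
    exact h2
  set f : ℕ → ℝ := fun n => Real.log |2 * Real.sin (Real.pi * n * ((a:ℝ)/b))| with hf
  -- Step A : log of sudler is a sum
  have hA : ∀ N ∈ Finset.range b.toNat,
      Real.log (sudler N ((a : ℝ) / b)) = ∑ n ∈ Finset.Icc 1 N, f n := by
    intro N hN
    rw [Finset.mem_range] at hN
    unfold sudler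
    rw [Real.log_prod]
    intro n hn
    rw [Finset.mem_Icc] at hn
    refine abs_ne_zero.mpr (mul_ne_zero two_ne_zero ?_)
    exact sin_ne_zero_aux a b hb hab hn.1 (by omega)
  rw [Finset.sum_congr rfl hA, hm]
  -- Step B : swap order of summation
  have hB : ∑ N ∈ Finset.range (m + 1), ∑ n ∈ Finset.Icc 1 N, f n
      = ∑ n ∈ Finset.Icc 1 m, ((m + 1 - n : ℕ) : ℝ) * f n := by
    rw [Finset.sum_comm' (t' := Finset.Icc 1 m) (s' := fun n => Finset.Icc n m)
      (by intro N n; simp only [Finset.mem_range, Finset.mem_Icc]; omega)]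
    apply Finset.sum_congr rfl
    intro n hn
    rw [Finset.sum_const, Nat.card_Icc, nsmul_eq_mul]
  rw [hB]
  -- symmetry of f
  have hsym : ∀ n ∈ Finset.Icc 1 m, f (m + 1 - n) = f n := by
    intro n hn
    rw [Finset.mem_Icc] at hn
    simp only [hf]
    congr 1
    have harg : Real.pi * ((m + 1 - n : ℕ) : ℝ) * ((a:ℝ)/b)
        = (a : ℤ) * Real.pi - Real.pi * n * ((a:ℝ)/b) := by
      have hbne : (b:ℝ) ≠ 0 := by exact_mod_cast (by omega : b ≠ 0)
      have hc : ((m + 1 - n : ℕ) : ℝ) = (b : ℝ) - n := by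
        rw [hbm]; push_cast [Nat.cast_sub (by omega : n ≤ m + 1)]; ring
      rw [hc]
      field_simp
    rw [harg, Real.sin_int_mul_pi_sub]
    simp [abs_mul, abs_neg_one_zpow]
  -- Step C : reflection identity
  have hC : ∑ n ∈ Finset.Icc 1 m, ((m + 1 - n : ℕ) : ℝ) * f n
      = ∑ n ∈ Finset.Icc 1 m, ((n : ℕ) : ℝ) * f n := by
    apply Finset.sum_nbij' (i := fun n => m + 1 - n) (j := fun n => m + 1 - n)
    · intro n hn; rw [Finset.mem_Icc] at hn ⊢; omega
    · intro n hn; rw [Finset.mem_Icc] at hn ⊢; omega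
    · intro n hn; rw [Finset.mem_Icc] at hn; omega
    · intro n hn; rw [Finset.mem_Icc] at hn; omega
    · intro n hn
      rw [hsym n hn]
  -- Step D : value of S
  have hS : ∑ n ∈ Finset.Icc 1 m, f n = Real.log ((m : ℝ) + 1) := by
    have hterm : ∀ n ∈ Finset.Icc 1 m,
        f n = Real.log |2 * Real.sin (Real.pi * n * r / ((m:ℝ) + 1))| := by
      intro n hn
      simp only [hf]
      rw [term_eq a b hb n, ← hrdef, hbm]
    rw [Finset.sum_congr rfl hterm, ← Real.log_prod]
    · rw [key_prod m r hcop]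
    · intro n hn
      rw [Finset.mem_Icc] at hn
      have h1 : |2 * Real.sin (Real.pi * n * ((a:ℝ)/b))| ≠ 0 :=
        abs_ne_zero.mpr (mul_ne_zero two_ne_zero
          (sin_ne_zero_aux a b hb hab hn.1 (by omega : (n:ℤ) < b)))
      rwa [term_eq a b hb n, ← hrdef, hbm] at h1
  -- final computation
  have hT2 : (∑ n ∈ Finset.Icc 1 m, ((m + 1 - n : ℕ) : ℝ) * f n) * 2
      = ((m:ℝ) + 1) * Real.log ((m:ℝ) + 1) := by
    have e1 : (∑ n ∈ Finset.Icc 1 m, ((m + 1 - n : ℕ) : ℝ) * f n) * 2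
        = (∑ n ∈ Finset.Icc 1 m, ((m + 1 - n : ℕ) : ℝ) * f n)
          + (∑ n ∈ Finset.Icc 1 m, ((n : ℕ) : ℝ) * f n) := by
      rw [← hC]; ring
    rw [e1, ← Finset.sum_add_distrib]
    have e2 : ∀ n ∈ Finset.Icc 1 m,
        ((m + 1 - n : ℕ) : ℝ) * f n + ((n : ℕ) : ℝ) * f n = ((m:ℝ) + 1) * f n := by
      intro n hn
      rw [Finset.mem_Icc] at hn
      have : ((m + 1 - n : ℕ) : ℝ) = (m:ℝ) + 1 - n := by
        push_cast [Nat.cast_sub (by omega : n ≤ m + 1)]; ring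
      rw [this]; ring
    rw [Finset.sum_congr rfl e2, ← Finset.mul_sum, hS]
  have hm1 : (m:ℝ) + 1 ≠ 0 := by positivity
  rw [hbm]
  field_simp
  linarith [hT2]
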